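/- Let T > 0, λ > 0, an integer N ≥ 2, and ρ ∈ ℝ. For w ∈ L²([0,T], ℝ^N) write y_i := ∫₀ᵀ w_i(t) dt and ȳ := (1/N) ∑_{i=1}^N y_i. Then the following are equivalent: (i) for every w ∈ L²([0,T], ℝ^N), λ ∫₀ᵀ (1/N) ∑_{i=1}^N w_i(t)² dt − ( (1/N) ∑_{i=1}^N y_i² − ȳ² ) ≥ ρ ∫₀ᵀ (1/N) ∑_{i=1}^N w_i(t)² dt; (ii) ρ ≤ λ − T. In particular, this coercivity estimate holds with some constant ρ > 0 if and only if λ > T, and the sharp (largest) coercivity constant equals λ − T, equality in (i) with ρ = λ − T being attained by any nonzero constant-in-time w with ∑_{i=1}^N w_i = 0. -/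

import Mathlib

open MeasureTheory Set

/-- Cauchy–Schwarz: the square of the integral is bounded by the total mass
times the integral of the square. -/
lemma sq_integral_le_aux {α : Type*} [MeasurableSpace α] (μ : Measure α) [IsFiniteMeasure μ]
    {f : α → ℝ} (hf : MemLp f 2 μ) :
    (∫ x, f x ∂μ) ^ 2 ≤ (μ univ).toReal * ∫ x, f x ^ 2 ∂μ := by
  have h22 : (2:ℝ).HolderConjugate 2 := Real.HolderConjugate.two_two
  have hf' : MemLp f (ENNReal.ofReal 2) μ := by
    rwa [show ENNReal.ofReal 2 = 2 by norm_num]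
  have hg' : MemLp (fun _ : α => (1:ℝ)) (ENNReal.ofReal 2) μ := memLp_const 1
  have h := integral_mul_norm_le_Lp_mul_Lq (μ := μ) h22 hf' hg'
  have e1 : (∫ a, ‖f a‖ * ‖(1:ℝ)‖ ∂μ) = ∫ a, |f a| ∂μ := by
    simp [Real.norm_eq_abs]
  have e2 : (∫ a, ‖f a‖ ^ (2:ℝ) ∂μ) = ∫ a, f a ^ 2 ∂μ := by
    refine integral_congr_ae (Filter.Eventually.of_forall fun a => ?_)
    show ‖f a‖ ^ (2:ℝ) = f a ^ 2
    rw [Real.rpow_two, Real.norm_eq_abs, sq_abs]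
  have e3 : (∫ _ : α, ‖(1:ℝ)‖ ^ (2:ℝ) ∂μ) = (μ univ).toReal := by
    simp [Measure.real]
  rw [e1, e2, e3] at h
  set A := ∫ a, f a ^ 2 ∂μ with hA
  set B := (μ univ).toReal with hB
  have hA0 : 0 ≤ A := integral_nonneg fun a => sq_nonneg _
  have hB0 : 0 ≤ B := ENNReal.toReal_nonneg
  have habs : |∫ x, f x ∂μ| ≤ A ^ ((1:ℝ)/2) * B ^ ((1:ℝ)/2) := by
    calc |∫ x, f x ∂μ| ≤ ∫ x, |f x| ∂μ := by
          simpa [Real.norm_eq_abs] using norm_integral_le_integral_norm (μ := μ) f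
      _ ≤ A ^ ((1:ℝ)/2) * B ^ ((1:ℝ)/2) := h
  have hsq : (∫ x, f x ∂μ) ^ 2 ≤ (A ^ ((1:ℝ)/2) * B ^ ((1:ℝ)/2)) ^ 2 := by
    rw [← sq_abs]
    exact pow_le_pow_left₀ (abs_nonneg _) habs 2
  calc (∫ x, f x ∂μ) ^ 2 ≤ (A ^ ((1:ℝ)/2) * B ^ ((1:ℝ)/2)) ^ 2 := hsq
    _ = A * B := by
        rw [mul_pow, ← Real.sqrt_eq_rpow, ← Real.sqrt_eq_rpow,
          Real.sq_sqrt hA0, Real.sq_sqrt hB0]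
    _ = B * A := mul_comm _ _

/-- Characterisation of the mean-field coercivity condition for the variance-maximisation
problem: the coercivity estimate with constant `ρ` holds for every `L²` control
perturbation `w` if and only if `ρ ≤ λ − T`; moreover equality is attained with
`ρ = λ − T` by any constant-in-time perturbation with zero mean. -/
theorem stmt_10 (T lam ρ : ℝ) (hT : 0 < T) (hlam : 0 < lam) (N : ℕ) (hN : 2 ≤ N) :
    ((∀ w : Fin N → ℝ → ℝ,
        (∀ i, MemLp (w i) 2 (volume.restrict (Icc (0:ℝ) T))) →
        lam * (∫ t in (0:ℝ)..T, (1 / (N:ℝ)) * ∑ i, (w i t) ^ 2)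
            - ((1 / (N:ℝ)) * ∑ i, (∫ t in (0:ℝ)..T, w i t) ^ 2
              - ((1 / (N:ℝ)) * ∑ i, ∫ t in (0:ℝ)..T, w i t) ^ 2)
          ≥ ρ * ∫ t in (0:ℝ)..T, (1 / (N:ℝ)) * ∑ i, (w i t) ^ 2)
      ↔ ρ ≤ lam - T)
    ∧
    (∀ c : Fin N → ℝ, (∑ i, c i = 0) →
      lam * (∫ t in (0:ℝ)..T, (1 / (N:ℝ)) * ∑ i, (c i) ^ 2)
          - ((1 / (N:ℝ)) * ∑ i, (∫ t in (0:ℝ)..T, c i) ^ 2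
            - ((1 / (N:ℝ)) * ∑ i, ∫ t in (0:ℝ)..T, c i) ^ 2)
        = (lam - T) * ∫ t in (0:ℝ)..T, (1 / (N:ℝ)) * ∑ i, (c i) ^ 2) := by
  have hT0 : (0:ℝ) ≤ T := hT.le
  have hNpos : (0:ℝ) < (N:ℝ) := by
    exact_mod_cast Nat.pos_of_ne_zero (by omega)
  have hconst : ∀ b : ℝ, (∫ _ in (0:ℝ)..T, b) = T * b := by
    intro b
    rw [intervalIntegral.integral_const, smul_eq_mul, sub_zero]
  -- the key equality for constant-in-time zero-mean perturbations
  have key : ∀ c : Fin N → ℝ, (∑ i, c i = 0) →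
      lam * (∫ t in (0:ℝ)..T, (1 / (N:ℝ)) * ∑ i, (c i) ^ 2)
          - ((1 / (N:ℝ)) * ∑ i, (∫ t in (0:ℝ)..T, c i) ^ 2
            - ((1 / (N:ℝ)) * ∑ i, ∫ t in (0:ℝ)..T, c i) ^ 2)
        = (lam - T) * ∫ t in (0:ℝ)..T, (1 / (N:ℝ)) * ∑ i, (c i) ^ 2 := by
    intro c hc
    simp only [hconst]
    have h2 : ∑ i, (T * c i) ^ 2 = T ^ 2 * ∑ i, c i ^ 2 := by
      rw [Finset.mul_sum]
      exact Finset.sum_congr rfl fun i _ => by ring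
    have h3 : ∑ i, T * c i = 0 := by rw [← Finset.mul_sum, hc, mul_zero]
    rw [h2, h3]
    ring
  refine ⟨⟨?_, ?_⟩, key⟩
  · -- coercivity implies ρ ≤ lam - T
    intro h
    set c : Fin N → ℝ := fun i =>
      (if (i : ℕ) = 0 then (1:ℝ) else 0) - (if (i : ℕ) = 1 then (1:ℝ) else 0) with hcdef
    have e0 : ∀ k, k < N → ∑ i : Fin N, (if (i : ℕ) = k then (1:ℝ) else 0) = 1 := by
      intro k hk
      have : ∀ i : Fin N, ((i : ℕ) = k) = (i = ⟨k, hk⟩) := fun i => by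
        simp [Fin.ext_iff]
      simp only [this]
      simp
    have hc : ∑ i, c i = 0 := by
      simp only [hcdef, Finset.sum_sub_distrib, e0 0 (by omega), e0 1 (by omega)]
      ring
    have hi0 : c ⟨0, by omega⟩ = 1 := by simp [hcdef]
    have hS : 0 < ∑ i, c i ^ 2 := by
      have h1 : (1:ℝ) ≤ ∑ i, c i ^ 2 := by
        calc (1:ℝ) = c ⟨0, by omega⟩ ^ 2 := by rw [hi0]; norm_num
          _ ≤ ∑ i, c i ^ 2 :=
            Finset.single_le_sum (fun i _ => sq_nonneg (c i)) (Finset.mem_univ _)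
      linarith
    haveI : IsFiniteMeasure (volume.restrict (Icc (0:ℝ) T)) := by
      constructor
      rw [Measure.restrict_apply_univ, Real.volume_Icc]
      exact ENNReal.ofReal_lt_top
    have hmem : ∀ i, MemLp (fun _ : ℝ => c i) 2 (volume.restrict (Icc (0:ℝ) T)) :=
      fun i => memLp_const (c i)
    have hineq := h (fun i _ => c i) hmem
    rw [key c hc] at hineq
    have hI : 0 < ∫ _ in (0:ℝ)..T, (1 / (N:ℝ)) * ∑ i, (c i) ^ 2 := by
      rw [hconst]
      have : 0 < (1 / (N:ℝ)) * ∑ i, c i ^ 2 := by positivity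
      positivity
    exact le_of_mul_le_mul_right (by linarith [hineq]) hI
  · -- ρ ≤ lam - T implies coercivity
    intro hρ w hw
    set μ2 := volume.restrict (Ioc (0:ℝ) T) with hμ2
    haveI : IsFiniteMeasure μ2 := by
      constructor
      rw [hμ2, Measure.restrict_apply_univ, Real.volume_Ioc]
      exact ENNReal.ofReal_lt_top
    have hμuniv : (μ2 univ).toReal = T := by
      rw [hμ2, Measure.restrict_apply_univ, Real.volume_Ioc, sub_zero,
        ENNReal.toReal_ofReal hT0]
    have hmem : ∀ i, MemLp (w i) 2 μ2 := by
      intro i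
      have h1 := (hw i).restrict (Ioc (0:ℝ) T)
      rwa [Measure.restrict_restrict measurableSet_Ioc,
        inter_eq_self_of_subset_left Ioc_subset_Icc_self] at h1
    have hint2 : ∀ i, Integrable (fun t => w i t ^ 2) μ2 := fun i => (hmem i).integrable_sq
    have hIeq : (∫ t in (0:ℝ)..T, (1 / (N:ℝ)) * ∑ i, (w i t) ^ 2)
        = (1 / (N:ℝ)) * ∑ i, ∫ t, w i t ^ 2 ∂μ2 := by
      rw [intervalIntegral.integral_of_le hT0]
      rw [MeasureTheory.integral_const_mul]
      rw [integral_finset_sum Finset.univ (fun i _ => hint2 i)]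
    have hy : ∀ i, (∫ t in (0:ℝ)..T, w i t) ^ 2 ≤ T * ∫ t, w i t ^ 2 ∂μ2 := by
      intro i
      rw [intervalIntegral.integral_of_le hT0]
      have h2 := sq_integral_le_aux μ2 (hmem i)
      rwa [hμuniv] at h2
    have hterm : ∀ i, (0:ℝ) ≤ ∫ t, w i t ^ 2 ∂μ2 :=
      fun i => integral_nonneg fun t => sq_nonneg _
    set A := ∑ i, ∫ t, w i t ^ 2 ∂μ2 with hAdef
    have hA0 : 0 ≤ A := Finset.sum_nonneg fun i _ => hterm i
    have hB0 : 0 ≤ (1 / (N:ℝ)) * A := by positivity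
    have hQ : (1 / (N:ℝ)) * ∑ i, (∫ t in (0:ℝ)..T, w i t) ^ 2 ≤ T * ((1 / (N:ℝ)) * A) := by
      have hsum : ∑ i, (∫ t in (0:ℝ)..T, w i t) ^ 2 ≤ T * A := by
        rw [hAdef, Finset.mul_sum]
        exact Finset.sum_le_sum fun i _ => hy i
      calc (1 / (N:ℝ)) * ∑ i, (∫ t in (0:ℝ)..T, w i t) ^ 2
          ≤ (1 / (N:ℝ)) * (T * A) :=
            mul_le_mul_of_nonneg_left hsum (by positivity)
        _ = T * ((1 / (N:ℝ)) * A) := by ring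
      -- done
    have hmul : ρ * ((1 / (N:ℝ)) * A) ≤ (lam - T) * ((1 / (N:ℝ)) * A) :=
      mul_le_mul_of_nonneg_right hρ hB0
    have hybar : 0 ≤ ((1 / (N:ℝ)) * ∑ i, ∫ t in (0:ℝ)..T, w i t) ^ 2 := sq_nonneg _
    rw [ge_iff_le, hIeq]
    nlinarith [hQ, hmul, hybar]
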